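/- Let T be a bounded linear operator on a complex Hilbert space H, let 0 < t < 1, and set r = min{t, 1−t} and R = max{t, 1−t}. Then ‖T‖ ≤ ω(T) + (‖T‖ − ‖(1−t)T + tT*‖)/(2r) − (ω(T) − ω((1−t)T + tT*))/(2R). In particular, (ω(T) − ω((1−t)T + tT*))/(2R) ≤ (‖T‖ − ‖(1−t)T + tT*‖)/(2r). -/

import Mathlib

open ContinuousLinearMap

/-- The numerical radius of a bounded operator on a complex inner product space:
`ω(T) = sup { |⟨Tx, x⟩| : ‖x‖ = 1 }`. -/
noncomputable def numRadius {E : Type*} [NormedAddCommGroup E] [InnerProductSpace ℂ E]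
    (T : E →L[ℂ] E) : ℝ :=
  ⨆ x : { x : E // ‖x‖ = 1 }, ‖(inner ℂ (T x) (x : E) : ℂ)‖

section aux

variable {E : Type*} [NormedAddCommGroup E] [InnerProductSpace ℂ E]

lemma numRadius_bdd (T : E →L[ℂ] E) :
    BddAbove (Set.range fun x : { x : E // ‖x‖ = 1 } => ‖(inner ℂ (T x) (x : E) : ℂ)‖) := by
  refine ⟨‖T‖, ?_⟩
  rintro _ ⟨x, rfl⟩
  calc ‖(inner ℂ (T x) (x : E) : ℂ)‖ ≤ ‖T (x : E)‖ * ‖(x : E)‖ := norm_inner_le_norm _ _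
    _ ≤ ‖T‖ * ‖(x : E)‖ * ‖(x : E)‖ := by
        gcongr; exact T.le_opNorm _
    _ = ‖T‖ := by rw [x.2]; ring

lemma inner_le_numRadius (T : E →L[ℂ] E) {x : E} (hx : ‖x‖ = 1) :
    ‖(inner ℂ (T x) x : ℂ)‖ ≤ numRadius T :=
  le_ciSup (numRadius_bdd T) (⟨x, hx⟩ : { x : E // ‖x‖ = 1 })

lemma numRadius_nonneg (T : E →L[ℂ] E) : 0 ≤ numRadius T :=
  Real.iSup_nonneg fun _ => norm_nonneg _

lemma numRadius_le_norm (T : E →L[ℂ] E) : numRadius T ≤ ‖T‖ := by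
  refine Real.iSup_le (fun x => ?_) (norm_nonneg T)
  calc ‖(inner ℂ (T x) (x : E) : ℂ)‖ ≤ ‖T (x : E)‖ * ‖(x : E)‖ := norm_inner_le_norm _ _
    _ ≤ ‖T‖ * ‖(x : E)‖ * ‖(x : E)‖ := by gcongr; exact T.le_opNorm _
    _ = ‖T‖ := by rw [x.2]; ring

lemma numRadius_le_of_pointwise (A B : E →L[ℂ] E)
    (h : ∀ x : E, ‖x‖ = 1 → ‖(inner ℂ (A x) x : ℂ)‖ ≤ ‖(inner ℂ (B x) x : ℂ)‖) :
    numRadius A ≤ numRadius B := by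
  refine Real.iSup_le (fun x => ?_) (numRadius_nonneg B)
  exact (h x x.2).trans (inner_le_numRadius B x.2)

lemma inner_abs_le_numRadius_smul (A : E →L[ℂ] E) (z : E) :
    ‖(inner ℂ (A z) z : ℂ)‖ ≤ numRadius A * (‖z‖ * ‖z‖) := by
  rcases eq_or_ne z 0 with rfl | hz
  · simp
  · have hz' : ‖z‖ ≠ 0 := norm_ne_zero_iff.mpr hz
    have hu : ‖((‖z‖⁻¹ : ℂ) • z : E)‖ = 1 := by
      rw [norm_smul]
      simp [hz']
    have h1 := inner_le_numRadius A hu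
    have h2 : (inner ℂ (A ((‖z‖⁻¹ : ℂ) • z)) ((‖z‖⁻¹ : ℂ) • z) : ℂ)
        = (‖z‖⁻¹ : ℂ) * (‖z‖⁻¹ : ℂ) * inner ℂ (A z) z := by
      rw [map_smul, inner_smul_left, inner_smul_right, map_inv₀, Complex.conj_ofReal]
      ring
    rw [h2] at h1
    rw [norm_mul, norm_mul] at h1
    simp only [Complex.norm_real, norm_inv, Complex.norm_real, norm_norm] at h1
    have h3 : ‖z‖⁻¹ * ‖z‖⁻¹ * ‖(inner ℂ (A z) z : ℂ)‖ ≤ numRadius A := by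
      simpa [mul_assoc] using h1
    have hzpos : (0:ℝ) < ‖z‖ := lt_of_le_of_ne (norm_nonneg z) (Ne.symm hz')
    calc ‖(inner ℂ (A z) z : ℂ)‖
        = (‖z‖⁻¹ * ‖z‖⁻¹ * ‖(inner ℂ (A z) z : ℂ)‖) * (‖z‖ * ‖z‖) := by
          field_simp
    _ ≤ numRadius A * (‖z‖ * ‖z‖) := by
          have := mul_nonneg (norm_nonneg z) (norm_nonneg z)
          gcongr

lemma norm_le_numRadius_of_symm (A : E →L[ℂ] E)
    (hA : ∀ x y : E, (inner ℂ (A x) y : ℂ) = inner ℂ x (A y)) :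
    ‖A‖ ≤ numRadius A := by
  set M := numRadius A with hM
  have hM0 : 0 ≤ M := numRadius_nonneg A
  have key : ∀ x y : E, ‖x‖ = 1 → ‖y‖ = 1 → Complex.re (inner ℂ (A x) y) ≤ M := by
    intro x y hx hy
    have e1 : (inner ℂ (A (x + y)) (x + y) : ℂ) - inner ℂ (A (x - y)) (x - y)
        = 2 * (inner ℂ (A x) y + inner ℂ (A y) x) := by
      simp only [map_add, map_sub, inner_add_left, inner_add_right, inner_sub_left,
        inner_sub_right]
      ring
    have e2 : (inner ℂ (A y) x : ℂ) = starRingEnd ℂ (inner ℂ (A x) y) := by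
      rw [hA y x, ← inner_conj_symm]
    have e3 : (inner ℂ (A (x + y)) (x + y) : ℂ) - inner ℂ (A (x - y)) (x - y)
        = (4 * Complex.re (inner ℂ (A x) y) : ℝ) := by
      rw [e1, e2]
      have := Complex.add_conj (inner ℂ (A x) y : ℂ)
      push_cast
      rw [this]
      push_cast
      ring
    have hb1 := inner_abs_le_numRadius_smul A (x + y)
    have hb2 := inner_abs_le_numRadius_smul A (x - y)
    have hpar := parallelogram_law_with_norm ℂ x y
    rw [hx, hy] at hpar
    have h4 : ‖(inner ℂ (A (x + y)) (x + y) : ℂ) - inner ℂ (A (x - y)) (x - y)‖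
        ≤ M * (‖x + y‖ * ‖x + y‖) + M * (‖x - y‖ * ‖x - y‖) :=
      le_trans (norm_sub_le _ _) (add_le_add hb1 hb2)
    have h5 : M * (‖x + y‖ * ‖x + y‖) + M * (‖x - y‖ * ‖x - y‖) = 4 * M := by
      rw [← mul_add, ← pow_two, ← pow_two, hpar]; ring
    have h6 : ‖((4 * Complex.re (inner ℂ (A x) y) : ℝ) : ℂ)‖ ≤ 4 * M := by
      rw [← e3]; rw [h5] at h4; exact h4
    have h7 : 4 * Complex.re (inner ℂ (A x) y) ≤ 4 * M := by
      calc 4 * Complex.re (inner ℂ (A x) y)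
          ≤ |4 * Complex.re (inner ℂ (A x) y)| := le_abs_self _
        _ = ‖((4 * Complex.re (inner ℂ (A x) y) : ℝ) : ℂ)‖ := by
            rw [Complex.norm_real, Real.norm_eq_abs]
        _ ≤ 4 * M := h6
    linarith
  refine A.opNorm_le_bound hM0 fun z => ?_
  rcases eq_or_ne z 0 with rfl | hz
  · simp
  · have hz' : ‖z‖ ≠ 0 := norm_ne_zero_iff.mpr hz
    have hzpos : (0:ℝ) < ‖z‖ := lt_of_le_of_ne (norm_nonneg z) (Ne.symm hz')
    set u : E := (‖z‖⁻¹ : ℂ) • z with hu_def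
    have hu : ‖u‖ = 1 := by rw [hu_def, norm_smul]; simp [hz']
    have hAu : ‖A u‖ ≤ M := by
      rcases eq_or_ne (A u) 0 with h0 | h0
      · rw [h0]; simpa using hM0
      · have hAu' : ‖A u‖ ≠ 0 := norm_ne_zero_iff.mpr h0
        set y : E := (‖A u‖⁻¹ : ℂ) • A u with hy_def
        have hy : ‖y‖ = 1 := by rw [hy_def, norm_smul]; simp [hAu']
        have := key u y hu hy
        have hcalc : (inner ℂ (A u) y : ℂ) = (‖A u‖ : ℂ) := by
          rw [hy_def, inner_smul_right, inner_self_eq_norm_sq_to_K]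
          have hne : ((‖A u‖ : ℂ)) ≠ 0 := by exact_mod_cast hAu'
          field_simp
          rfl
        rw [hcalc] at this
        simpa using this
    calc ‖A z‖ = ‖z‖ * ‖A u‖ := by
          rw [hu_def, map_smul, norm_smul]
          simp [hz']
    _ ≤ ‖z‖ * M := by gcongr
    _ = M * ‖z‖ := mul_comm _ _

end aux

lemma norm_smul_add_smul_le {E : Type*} [NormedAddCommGroup E] [InnerProductSpace ℂ E]
    (a b : ℝ) (B C : E →L[ℂ] E) (ha : 0 ≤ a) (hb : 0 ≤ b) :
    ‖((a : ℝ) : ℂ) • B + ((b : ℝ) : ℂ) • C‖ ≤ a * ‖B‖ + b * ‖C‖ := by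
  calc ‖((a : ℝ) : ℂ) • B + ((b : ℝ) : ℂ) • C‖
      ≤ ‖((a : ℝ) : ℂ) • B‖ + ‖((b : ℝ) : ℂ) • C‖ := norm_add_le _ _
    _ = a * ‖B‖ + b * ‖C‖ := by
        rw [norm_smul ((a : ℝ) : ℂ) B, norm_smul ((b : ℝ) : ℂ) C, Complex.norm_real,
          Complex.norm_real, Real.norm_eq_abs, Real.norm_eq_abs, abs_of_nonneg ha,
          abs_of_nonneg hb]

/-- For `0 < t < 1`, `r = min{t,1−t}`, `R = max{t,1−t}`:
`‖T‖ ≤ ω(T) + (‖T‖ − ‖(1−t)T+tT*‖)/(2r) − (ω(T) − ω((1−t)T+tT*))/(2R)`, and in particular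
`(ω(T) − ω((1−t)T+tT*))/(2R) ≤ (‖T‖ − ‖(1−t)T+tT*‖)/(2r)`. -/
theorem stmt_12 {H : Type*} [NormedAddCommGroup H] [InnerProductSpace ℂ H] [CompleteSpace H]
    (T : H →L[ℂ] H) (t r R : ℝ) (ht0 : 0 < t) (ht1 : t < 1)
    (hr : r = min t (1 - t)) (hR : R = max t (1 - t)) :
    ‖T‖ ≤
        numRadius T +
          (‖T‖ - ‖((1 - t : ℝ) : ℂ) • T + ((t : ℝ) : ℂ) • adjoint T‖) / (2 * r) -
          (numRadius T - numRadius (((1 - t : ℝ) : ℂ) • T + ((t : ℝ) : ℂ) • adjoint T)) /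
            (2 * R) ∧
      (numRadius T - numRadius (((1 - t : ℝ) : ℂ) • T + ((t : ℝ) : ℂ) • adjoint T)) / (2 * R) ≤
        (‖T‖ - ‖((1 - t : ℝ) : ℂ) • T + ((t : ℝ) : ℂ) • adjoint T‖) / (2 * r) := by
  set S : H →L[ℂ] H := ((1 - t : ℝ) : ℂ) • T + ((t : ℝ) : ℂ) • adjoint T with hS
  set A : H →L[ℂ] H := ((1/2 : ℝ) : ℂ) • (T + adjoint T) with hA
  -- basic positivity
  have hrpos : 0 < r := by rw [hr]; simp [ht0]; linarith
  have hrhalf : r ≤ 1/2 := by rw [hr]; rcases le_total t (1-t) with h | h <;>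
    simp [min_eq_left, min_eq_right, h] <;> linarith
  have hRhalf : 1/2 ≤ R := by rw [hR]; rcases le_total t (1-t) with h | h <;>
    simp [max_eq_left, max_eq_right, h] <;> linarith
  have hRpos : 0 < R := by linarith
  -- A is symmetric
  have hsymm : ∀ x y : H, (inner ℂ (A x) y : ℂ) = inner ℂ x (A y) := by
    intro x y
    simp only [hA, ContinuousLinearMap.add_apply, ContinuousLinearMap.coe_smul',
      Pi.smul_apply, inner_smul_left, inner_smul_right, inner_add_left, inner_add_right,
      adjoint_inner_left, adjoint_inner_right, map_div₀, map_one, Complex.conj_ofReal]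
    ring
  -- inner products
  have hAxx : ∀ x : H, (inner ℂ (A x) x : ℂ) = (((inner ℂ (T x) x : ℂ).re : ℝ) : ℂ) := by
    intro x
    have h1 : (inner ℂ ((adjoint T) x) x : ℂ) = starRingEnd ℂ (inner ℂ (T x) x) := by
      rw [adjoint_inner_left, ← inner_conj_symm]
    simp only [hA, ContinuousLinearMap.add_apply, ContinuousLinearMap.coe_smul',
      Pi.smul_apply, inner_smul_left, inner_add_left, h1, Complex.conj_ofReal]
    rw [Complex.add_conj]
    push_cast
    ring
  have hSre : ∀ x : H, (inner ℂ (S x) x : ℂ).re = (inner ℂ (T x) x : ℂ).re := by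
    intro x
    have h1 : (inner ℂ ((adjoint T) x) x : ℂ) = starRingEnd ℂ (inner ℂ (T x) x) := by
      rw [adjoint_inner_left, ← inner_conj_symm]
    simp only [hS, ContinuousLinearMap.add_apply, ContinuousLinearMap.coe_smul',
      Pi.smul_apply, inner_smul_left, inner_add_left, h1, Complex.conj_ofReal]
    have h2 : (inner ℂ x (T x) : ℂ).re = (inner ℂ (T x) x : ℂ).re := by
      rw [← inner_conj_symm x (T x), Complex.conj_re]
    simp [Complex.add_re, Complex.mul_re, Complex.conj_re, Complex.conj_im]
    rw [h2]
    ring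
  -- numerical radius comparisons
  have hAT : numRadius A ≤ numRadius T := by
    refine numRadius_le_of_pointwise A T fun x hx => ?_
    rw [hAxx x, Complex.norm_real, Real.norm_eq_abs]
    exact Complex.abs_re_le_norm _
  have hAS : numRadius A ≤ numRadius S := by
    refine numRadius_le_of_pointwise A S fun x hx => ?_
    rw [hAxx x, Complex.norm_real, Real.norm_eq_abs, ← hSre x]
    exact Complex.abs_re_le_norm _
  have hnormA : ‖A‖ ≤ numRadius A := norm_le_numRadius_of_symm A hsymm
  have hwT : numRadius T ≤ ‖T‖ := numRadius_le_norm T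
  -- norm decomposition of S
  have hs_le : ‖S‖ ≤ (1 - 2*r) * ‖T‖ + 2*r * ‖A‖ := by
    rcases le_total t (1/2) with h | h
    · have hrt : r = t := by rw [hr, min_eq_left]; linarith
      have hdecomp : S = ((1 - 2*t : ℝ) : ℂ) • T + ((2*t : ℝ) : ℂ) • A := by
        rw [hS, hA]; push_cast; module
      rw [hdecomp, hrt]
      exact norm_smul_add_smul_le _ _ _ _ (by linarith) (by linarith)
    · have hrt : r = 1 - t := by rw [hr, min_eq_right]; linarith
      have hdecomp : S = ((2*t - 1 : ℝ) : ℂ) • (adjoint T) + ((2 - 2*t : ℝ) : ℂ) • A := by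
        rw [hS, hA]; push_cast; module
      rw [hdecomp, hrt]
      have hadj : ‖adjoint T‖ = ‖T‖ := ContinuousLinearMap.adjoint.norm_map T
      calc ‖((2*t - 1 : ℝ) : ℂ) • (adjoint T) + ((2 - 2*t : ℝ) : ℂ) • A‖
          ≤ (2*t - 1) * ‖adjoint T‖ + (2 - 2*t) * ‖A‖ :=
            norm_smul_add_smul_le _ _ _ _ (by linarith) (by linarith)
        _ = (1 - 2*(1 - t)) * ‖T‖ + 2*(1 - t) * ‖A‖ := by rw [hadj]; ring
  -- key real inequalities
  have hhw : ‖A‖ ≤ numRadius T := le_trans hnormA hAT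
  have hhv : ‖A‖ ≤ numRadius S := le_trans hnormA hAS
  have key1 : ‖T‖ - ‖A‖ ≤ (‖T‖ - ‖S‖) / (2*r) := by
    rw [le_div_iff₀ (by linarith)]
    nlinarith [numRadius_le_norm T, le_trans hhw hwT]
  have key2 : (numRadius T - numRadius S) / (2*R) ≤ numRadius T - ‖A‖ := by
    rw [div_le_iff₀ (by linarith)]
    nlinarith [mul_nonneg (sub_nonneg.2 hhw) (by linarith : (0:ℝ) ≤ 2*R - 1)]
  constructor <;> linarith
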